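/- arXiv:2305.07539 — 2 statements merged into one kernel-verified Lean document; each statement's English description precedes it below -/
import Mathlib

section
/- In the general setting, assume 2·Σ_{k>⌊m/4⌋} α_k·Λ_{4k}/k < ∞. Then for any mapping A : F → V_m and all f ∈ F: ‖f − A f‖_{L_∞(μ)} ≤ 2·Σ_{k>⌊m/4⌋} α_k·Λ_{4k}/k + Λ_m·‖f − A f‖_{L₂(μ)}. -/
open MeasureTheory ENNReal

/-- The (inverse) Christoffel function `Λ(V) = sup_{f ∈ V, f ≠ 0} ‖f‖_∞ / ‖f‖_2`. -/
noncomputable def christoffel {D : Type*} [MeasurableSpace D] (μ : Measure D)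
    (V : Submodule ℂ (D → ℂ)) : ℝ≥0∞ :=
  ⨆ f ∈ V, eLpNorm f ⊤ μ / eLpNorm f 2 μ

/-- `V_n = span{b_1, …, b_n}`. -/
noncomputable def Vspan {D : Type*} (b : ℕ → D → ℂ) (n : ℕ) : Submodule ℂ (D → ℂ) :=
  Submodule.span ℂ (b '' Set.Icc 1 n)

/-- `α_n = sup_{f ∈ F} inf_{g ∈ V_n} ‖f - g‖_{L₂(μ)}`, the error of best
`L₂(μ)`-approximation of `F` from `V_n` (equal to the projection error). -/
noncomputable def alphaSeq {D : Type*} [MeasurableSpace D] (μ : Measure D)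
    (F : Set (D → ℂ)) (b : ℕ → D → ℂ) (n : ℕ) : ℝ≥0∞ :=
  ⨆ f ∈ F, ⨅ g ∈ Vspan b n, eLpNorm (fun x => f x - g x) 2 μ

section aux
open NNReal
variable {D : Type*} [MeasurableSpace D] {μ : Measure D} {bb : ℕ → D → ℂ}

lemma Vspan_mono (bb : ℕ → D → ℂ) {a b : ℕ} (h : a ≤ b) : Vspan bb a ≤ Vspan bb b :=
  Submodule.span_mono (Set.image_mono (Set.Icc_subset_Icc_right h))

lemma christoffel_mono {V W : Submodule ℂ (D → ℂ)} (h : V ≤ W) :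
    christoffel μ V ≤ christoffel μ W := by
  refine iSup₂_le fun g hg => ?_
  exact le_iSup₂ (f := fun g (_ : g ∈ W) => eLpNorm g ⊤ μ / eLpNorm g 2 μ) g (h hg)

lemma alphaSeq_anti {F : Set (D → ℂ)} {a b : ℕ} (h : a ≤ b) :
    alphaSeq μ F bb b ≤ alphaSeq μ F bb a := by
  refine iSup₂_le fun g hg => ?_
  refine le_trans ?_ (le_iSup₂ (f := fun g (_ : g ∈ F) => ⨅ g' ∈ Vspan bb a, eLpNorm (fun x => g x - g' x) 2 μ) g hg)
  exact le_iInf₂ fun g' hg' => iInf₂_le g' (Vspan_mono bb h hg')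

lemma memL2_bb (hmeas : ∀ k, Measurable (bb k))
    (hON : ∀ j k, 1 ≤ j → 1 ≤ k →
      ∫ x, (starRingEnd ℂ) (bb j x) * bb k x ∂μ = if j = k then 1 else 0)
    {k : ℕ} (hk : 1 ≤ k) : MemLp (bb k) 2 μ := by
  refine (memLp_two_iff_integrable_sq_norm (hmeas k).aestronglyMeasurable).2 ?_
  have h1 := hON k k hk hk
  rw [if_pos rfl] at h1
  have hI : Integrable (fun x => (starRingEnd ℂ) (bb k x) * bb k x) μ := by
    by_contra hI
    rw [integral_undef hI] at h1
    exact one_ne_zero h1.symm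
  refine hI.re.congr (Filter.Eventually.of_forall fun x => ?_)
  have : (starRingEnd ℂ) (bb k x) * bb k x = ((‖bb k x‖ ^ 2 : ℝ) : ℂ) := by
    rw [mul_comm, Complex.mul_conj]
    simp [Complex.normSq_eq_norm_sq]
  show RCLike.re ((starRingEnd ℂ) (bb k x) * bb k x) = ‖bb k x‖ ^ 2
  rw [this]
  simp [← Complex.ofReal_pow]

lemma memL2_span (hmeas : ∀ k, Measurable (bb k))
    (hON : ∀ j k, 1 ≤ j → 1 ≤ k →
      ∫ x, (starRingEnd ℂ) (bb j x) * bb k x ∂μ = if j = k then 1 else 0)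
    {n : ℕ} {h : D → ℂ} (hh : h ∈ Vspan bb n) : MemLp h 2 μ := by
  induction hh using Submodule.span_induction with
  | mem x hx =>
    obtain ⟨k, hk, rfl⟩ := hx
    exact memL2_bb hmeas hON hk.1
  | zero => exact MemLp.zero
  | add x y hx hy ihx ihy => exact ihx.add ihy
  | smul a x hx ihx => exact ihx.const_smul a

end aux

section aux2
open NNReal
variable {D : Type*} [MeasurableSpace D] {μ : Measure D}

lemma christoffel_bound {V : Submodule ℂ (D → ℂ)}
    {h : D → ℂ} (hh : h ∈ V) (hmem : MemLp h 2 μ) :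
    eLpNorm h ⊤ μ ≤ christoffel μ V * eLpNorm h 2 μ := by
  by_cases h2 : eLpNorm h 2 μ = 0
  · have hz : h =ᵐ[μ] 0 := (eLpNorm_eq_zero_iff hmem.1 two_ne_zero).1 h2
    rw [eLpNorm_congr_ae hz, eLpNorm_zero]
    exact zero_le
  · have hle : eLpNorm h ⊤ μ / eLpNorm h 2 μ ≤ christoffel μ V :=
      le_iSup₂ (f := fun g (_ : g ∈ V) => eLpNorm g ⊤ μ / eLpNorm g 2 μ) h hh
    rw [ENNReal.div_le_iff h2 hmem.2.ne] at hle
    exact hle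

set_option maxHeartbeats 1000000 in
lemma harmonic_top (c : ℝ≥0∞) (hc : c ≠ 0) (N : ℕ) :
    (∑' k : ℕ, if N < k then c / k else 0) = ⊤ := by
  have hbase : (∑' k : ℕ, if N < k then ((k : ℝ≥0∞))⁻¹ else 0) = ⊤ := by
    by_contra hne
    have hco : ∀ k : ℕ, (if N < k then ((k : ℝ≥0∞))⁻¹ else 0)
        = (((if N < k then ((k : ℝ≥0))⁻¹ else 0) : ℝ≥0) : ℝ≥0∞) := by
      intro k
      by_cases hk : N < k
      · rw [if_pos hk, if_pos hk, ENNReal.coe_inv (Nat.cast_ne_zero.2 (by omega)), ENNReal.coe_natCast]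
      · rw [if_neg hk, if_neg hk, ENNReal.coe_zero]
    rw [tsum_congr hco] at hne
    have hsum : Summable (fun k : ℕ => (if N < k then ((k : ℝ≥0))⁻¹ else 0)) :=
      ENNReal.tsum_coe_ne_top_iff_summable.1 hne
    have hsumR := NNReal.summable_coe.2 hsum
    have hshift : Summable (fun i : ℕ => ((i + (N+1) : ℕ) : ℝ)⁻¹) := by
      have := (_root_.summable_nat_add_iff (N+1)).2 hsumR
      refine this.congr fun i => ?_
      simp only [if_pos (show N < i + (N+1) by omega)]
      push_cast
      rfl
    have : Summable (fun i : ℕ => ((i : ℝ))⁻¹) := (_root_.summable_nat_add_iff (N+1)).1 hshift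
    exact Real.not_summable_natCast_inv this
  have hfac : ∀ k : ℕ, (if N < k then c / k else 0)
      = c * (if N < k then ((k : ℝ≥0∞))⁻¹ else 0) := by
    intro k
    by_cases hk : N < k
    · rw [if_pos hk, if_pos hk, div_eq_mul_inv]
    · rw [if_neg hk, if_neg hk, mul_zero]
  rw [tsum_congr hfac, ENNReal.tsum_mul_left, hbase, ENNReal.mul_top hc]

end aux2

lemma pow_block_le (t : ℕ → ℝ≥0∞) (m : ℕ) (hm : 1 ≤ m) (j : ℕ) (c : ℝ≥0∞)
    (hlow : ∀ k ∈ Finset.Ioc (2^j*m/2) (2^j*m), c / ((2^j*m : ℕ) : ℝ≥0∞) ≤ t k) :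
    c ≤ 2 * ∑ k ∈ Finset.Ioc (2^j*m/2) (2^j*m), t k := by
  set n := 2^j*m with hn
  have hn1 : 1 ≤ n := Nat.one_le_iff_ne_zero.2 (by positivity)
  have hcard : (Finset.Ioc (n/2) n).card = n - n/2 := Nat.card_Ioc _ _
  have hsum : (Finset.Ioc (n/2) n).card • (c / (n : ℝ≥0∞)) ≤ ∑ k ∈ Finset.Ioc (n/2) n, t k :=
    Finset.card_nsmul_le_sum _ _ _ (fun k hk => hlow k hk)
  rw [hcard] at hsum
  have h2 : c ≤ 2 * ((n - n/2 : ℕ) • (c / (n : ℝ≥0∞))) := by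
    rw [nsmul_eq_mul, ← mul_assoc]
    have hge : ((n : ℕ) : ℝ≥0∞) ≤ 2 * ((n - n/2 : ℕ) : ℝ≥0∞) := by
      rw [show (2 : ℝ≥0∞) = ((2:ℕ) : ℝ≥0∞) by norm_cast, ← Nat.cast_mul]
      exact_mod_cast (by omega : n ≤ 2 * (n - n/2))
    calc c = (n : ℝ≥0∞) * (c / (n : ℝ≥0∞)) :=
          (ENNReal.mul_div_cancel (Nat.cast_ne_zero.2 (by omega)) (ENNReal.natCast_ne_top n)).symm
      _ ≤ 2 * ((n - n/2 : ℕ) : ℝ≥0∞) * (c / (n : ℝ≥0∞)) := by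
          exact mul_le_mul_left hge _
  exact h2.trans (by exact mul_le_mul_right hsum 2)

lemma tsum_blocks_le (t : ℕ → ℝ≥0∞) (m : ℕ) (hm : 1 ≤ m) :
    (∑' j : ℕ, ∑ k ∈ Finset.Ioc (2^j*m/2) (2^j*m), t k) ≤ ∑' k, t k := by
  have key : ∀ i j : ℕ, i < j → 2^i*m ≤ 2^j*m/2 := by
    intro i j hij
    have h1 : 2^(i+1)*m/2 = 2^i*m := by
      rw [pow_succ]
      rw [show 2^i*2*m = 2*(2^i*m) by ring]
      exact Nat.mul_div_cancel_left _ (by norm_num)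
    rw [← h1]
    exact Nat.div_le_div_right (Nat.mul_le_mul_right m (Nat.pow_le_pow_right (by norm_num) hij))
  have hdisj : ∀ i j : ℕ, i ≠ j →
      Disjoint (Finset.Ioc (2^i*m/2) (2^i*m)) (Finset.Ioc (2^j*m/2) (2^j*m)) := by
    intro i j hij
    rw [Finset.disjoint_left]
    intro k hki hkj
    simp only [Finset.mem_Ioc] at hki hkj
    rcases Nat.lt_or_ge i j with h | h
    · exact absurd hkj.1 (not_lt.2 (hki.2.trans (key i j h)))
    · have h' : j < i := lt_of_le_of_ne h (Ne.symm hij)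
      exact absurd hki.1 (not_lt.2 (hkj.2.trans (key j i h')))
  rw [ENNReal.tsum_eq_iSup_nat (f := fun j => ∑ k ∈ Finset.Ioc (2^j*m/2) (2^j*m), t k)]
  refine iSup_le fun J => ?_
  rw [← Finset.sum_biUnion (fun i _ => fun j _ => fun hij => hdisj i j hij)]
  exact ENNReal.sum_le_tsum _


open NNReal
set_option maxHeartbeats 2000000

/-- **Lemma (lifting `L₂` bounds to `L_∞`, general classes).**
In the general setting, if `2 ∑_{k>⌊m/4⌋} α_k Λ_{4k} / k < ∞`, then for any mapping
`A : F → V_m` and all `f ∈ F`: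
`‖f - A f‖_∞ ≤ 2 ∑_{k>⌊m/4⌋} α_k Λ_{4k}/k + Λ_m ‖f - A f‖₂`. -/
theorem stmt5 {D : Type*} [MeasurableSpace D] (μ : Measure D)
    (bb : ℕ → D → ℂ)
    (hmeas : ∀ k, Measurable (bb k))
    (hbdd : ∀ k, ∃ M : ℝ, ∀ x, ‖bb k x‖ ≤ M)
    (hON : ∀ j k, 1 ≤ j → 1 ≤ k →
      ∫ x, (starRingEnd ℂ) (bb j x) * bb k x ∂μ = if j = k then 1 else 0)
    (F : Set (D → ℂ))
    (hFbdd : ∀ f ∈ F, ∃ M : ℝ, ∀ x, ‖f x‖ ≤ M)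
    (hFmeas : ∀ f ∈ F, Measurable f)
    (hFL2 : ∀ f ∈ F, MemLp f 2 μ)
    (m : ℕ) (hm : 1 ≤ m)
    (hfin : (∑' k : ℕ, if m / 4 < k then
        alphaSeq μ F bb k * christoffel μ (Vspan bb (4 * k)) / (k : ℝ≥0∞) else 0) ≠ ⊤)
    (A : (D → ℂ) → D → ℂ) (hA : ∀ f ∈ F, A f ∈ Vspan bb m)
    (f : D → ℂ) (hf : f ∈ F) :
    eLpNorm (fun x => f x - A f x) ⊤ μ ≤
      2 * (∑' k : ℕ, if m / 4 < k then
          alphaSeq μ F bb k * christoffel μ (Vspan bb (4 * k)) / (k : ℝ≥0∞) else 0) +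
        christoffel μ (Vspan bb m) * eLpNorm (fun x => f x - A f x) 2 μ := by
  classical
  set S := (∑' k : ℕ, if m / 4 < k then
      alphaSeq μ F bb k * christoffel μ (Vspan bb (4 * k)) / (k : ℝ≥0∞) else 0) with hS
  have hsp : ∀ {n : ℕ} {h : D → ℂ}, h ∈ Vspan bb n → MemLp h 2 μ :=
    fun hh => memL2_span hmeas hON hh
  have hαa : ∀ {i j : ℕ}, i ≤ j → alphaSeq μ F bb j ≤ alphaSeq μ F bb i :=
    fun h => alphaSeq_anti h
  have hΛm : ∀ {i j : ℕ}, i ≤ j →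
      christoffel μ (Vspan bb i) ≤ christoffel μ (Vspan bb j) :=
    fun h => christoffel_mono (Vspan_mono bb h)
  -- Hilbert space setup
  set E : ℕ → Lp ℂ 2 μ := fun k =>
    if hk : 1 ≤ k then (memL2_bb hmeas hON hk).toLp (bb k) else 0 with hEdef
  have hE : ∀ k, 1 ≤ k → (E k : D → ℂ) =ᵐ[μ] bb k := by
    intro k hk
    simp only [hEdef, dif_pos hk]
    exact MemLp.coeFn_toLp _
  set K : ℕ → Submodule ℂ (Lp ℂ 2 μ) := fun n => Submodule.span ℂ (E '' Set.Icc 1 n)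
    with hKdef
  haveI hKfd : ∀ n, FiniteDimensional ℂ (K n) :=
    fun n => FiniteDimensional.span_of_finite ℂ ((Set.finite_Icc 1 n).image E)
  haveI hKcs : ∀ n, CompleteSpace (K n) := fun n => FiniteDimensional.complete ℂ _
  have Kmono : ∀ {a b : ℕ}, a ≤ b → K a ≤ K b :=
    fun h => Submodule.span_mono (Set.image_mono (Set.Icc_subset_Icc_right h))
  -- representatives
  have hrepr : ∀ n : ℕ, ∀ u : Lp ℂ 2 μ, u ∈ K n →
      ∃ h ∈ Vspan bb n, h =ᵐ[μ] (u : D → ℂ) := by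
    intro n u hu
    induction hu using Submodule.span_induction with
    | mem x hx =>
      obtain ⟨k, hk, rfl⟩ := hx
      exact ⟨bb k, Submodule.subset_span ⟨k, hk, rfl⟩, (hE k hk.1).symm⟩
    | zero => exact ⟨0, Submodule.zero_mem _, (Lp.coeFn_zero ℂ 2 μ).symm⟩
    | add x y hx hy ihx ihy =>
      obtain ⟨h₁, hm₁, hae₁⟩ := ihx
      obtain ⟨h₂, hm₂, hae₂⟩ := ihy
      exact ⟨h₁ + h₂, Submodule.add_mem _ hm₁ hm₂,
        (hae₁.add hae₂).trans (Lp.coeFn_add x y).symm⟩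
    | smul a x hx ihx =>
      obtain ⟨h₁, hm₁, hae₁⟩ := ihx
      exact ⟨a • h₁, Submodule.smul_mem _ a hm₁,
        (hae₁.const_smul a).trans (Lp.coeFn_smul a x).symm⟩
  have htoK : ∀ n : ℕ, ∀ g : D → ℂ, g ∈ Vspan bb n →
      ∃ u ∈ K n, g =ᵐ[μ] (u : D → ℂ) := by
    intro n g hg
    induction hg using Submodule.span_induction with
    | mem x hx =>
      obtain ⟨k, hk, rfl⟩ := hx
      exact ⟨E k, Submodule.subset_span ⟨k, hk, rfl⟩, (hE k hk.1).symm⟩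
    | zero => exact ⟨0, Submodule.zero_mem _, (Lp.coeFn_zero ℂ 2 μ).symm⟩
    | add x y hx hy ihx ihy =>
      obtain ⟨u₁, hm₁, hae₁⟩ := ihx
      obtain ⟨u₂, hm₂, hae₂⟩ := ihy
      exact ⟨u₁ + u₂, Submodule.add_mem _ hm₁ hm₂,
        (hae₁.add hae₂).trans (Lp.coeFn_add u₁ u₂).symm⟩
    | smul a x hx ihx =>
      obtain ⟨u₁, hm₁, hae₁⟩ := ihx
      exact ⟨a • u₁, Submodule.smul_mem _ a hm₁,
        (hae₁.const_smul a).trans (Lp.coeFn_smul a u₁).symm⟩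
  have ennnorm : ∀ u : Lp ℂ 2 μ, (‖u‖₊ : ℝ≥0∞) = eLpNorm (u : D → ℂ) 2 μ := by
    intro u
    rw [Lp.nnnorm_def, ENNReal.coe_toNNReal (Lp.eLpNorm_ne_top u)]
  set fL : Lp ℂ 2 μ := (hFL2 f hf).toLp f with hfLdef
  have hfLae : (fL : D → ℂ) =ᵐ[μ] f := MemLp.coeFn_toLp _
  -- contraction
  have hcontr : ∀ n (v : Lp ℂ 2 μ),
      ‖(Submodule.orthogonalProjectionOnto (K n) v : Lp ℂ 2 μ)‖ ≤ ‖v‖ := by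
    intro n v
    calc ‖(Submodule.orthogonalProjectionOnto (K n) v : Lp ℂ 2 μ)‖
        ≤ ‖Submodule.orthogonalProjectionOnto (K n)‖ * ‖v‖ := (Submodule.orthogonalProjectionOnto (K n)).le_opNorm v
      _ ≤ 1 * ‖v‖ := mul_le_mul_of_nonneg_right (Submodule.orthogonalProjectionOnto_norm_le (K n)) (norm_nonneg v)
      _ = ‖v‖ := one_mul _
  -- projection error bounded by alpha
  have hperr : ∀ n : ℕ,
      (‖fL - (Submodule.orthogonalProjectionOnto (K n) fL : Lp ℂ 2 μ)‖₊ : ℝ≥0∞) ≤ alphaSeq μ F bb n := by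
    intro n
    have step1 : ∀ g ∈ Vspan bb n,
        (‖fL - (Submodule.orthogonalProjectionOnto (K n) fL : Lp ℂ 2 μ)‖₊ : ℝ≥0∞) ≤
          eLpNorm (fun x => f x - g x) 2 μ := by
      intro g hg
      obtain ⟨u, huK, hgu⟩ := htoK n g hg
      have he1 : eLpNorm (fun x => f x - g x) 2 μ = (‖fL - u‖₊ : ℝ≥0∞) := by
        rw [ennnorm]
        refine eLpNorm_congr_ae ?_
        filter_upwards [hfLae, hgu, Lp.coeFn_sub fL u] with x h1 h2 h3
        rw [h3, Pi.sub_apply, h1, h2]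
      rw [he1]
      refine ENNReal.coe_le_coe.2 ?_
      have hmin : ‖fL - (Submodule.orthogonalProjectionOnto (K n) fL : Lp ℂ 2 μ)‖ ≤ ‖fL - u‖ := by
        rw [show ‖fL - (Submodule.orthogonalProjectionOnto (K n) fL : Lp ℂ 2 μ)‖ = _ from Submodule.starProjection_minimal fL]
        exact ciInf_le ⟨0, by rintro r ⟨x, rfl⟩; exact norm_nonneg _⟩ (⟨u, huK⟩ : K n)
      rw [← NNReal.coe_le_coe]
      simpa using hmin
    calc (‖fL - (Submodule.orthogonalProjectionOnto (K n) fL : Lp ℂ 2 μ)‖₊ : ℝ≥0∞)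
        ≤ ⨅ g ∈ Vspan bb n, eLpNorm (fun x => f x - g x) 2 μ := le_iInf₂ step1
      _ ≤ alphaSeq μ F bb n :=
          le_iSup₂ (f := fun f (_ : f ∈ F) =>
            ⨅ g ∈ Vspan bb n, eLpNorm (fun x => f x - g x) 2 μ) f hf
  -- positivity of christoffel
  have hc4 : (eLpNorm (bb 1) ⊤ μ / eLpNorm (bb 1) 2 μ) ≠ 0 := by
    have hb1L2 : MemLp (bb 1) 2 μ := memL2_bb hmeas hON le_rfl
    have htopne : eLpNorm (bb 1) ⊤ μ ≠ 0 := by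
      intro h0
      have hz : bb 1 =ᵐ[μ] 0 :=
        (eLpNorm_eq_zero_iff (hmeas 1).aestronglyMeasurable (by simp)).1 h0
      have hint : ∫ x, (starRingEnd ℂ) (bb 1 x) * bb 1 x ∂μ = 0 := by
        rw [integral_congr_ae (g := fun _ => (0 : ℂ))]
        · exact integral_zero _ _
        · filter_upwards [hz] with x hx
          rw [hx]
          simp
      rw [hON 1 1 le_rfl le_rfl, if_pos rfl] at hint
      exact one_ne_zero hint
    exact (ENNReal.div_pos htopne hb1L2.2.ne).ne'
  have hc4le : ∀ k : ℕ, 1 ≤ k →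
      (eLpNorm (bb 1) ⊤ μ / eLpNorm (bb 1) 2 μ) ≤ christoffel μ (Vspan bb (4 * k)) := by
    intro k hk
    have hb1mem : bb 1 ∈ Vspan bb (4 * k) :=
      Submodule.subset_span ⟨1, ⟨le_rfl, by omega⟩, rfl⟩
    exact le_iSup₂ (f := fun g (_ : g ∈ Vspan bb (4 * k)) =>
      eLpNorm g ⊤ μ / eLpNorm g 2 μ) (bb 1) hb1mem
  -- alpha tends to zero along 2^j * m
  have hinf : ∀ ε : ℝ≥0∞, 0 < ε → ∃ k, m < k ∧ alphaSeq μ F bb k < ε := by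
    intro ε hε
    by_contra hno
    push_neg at hno
    have hlow : ∀ k : ℕ, (if m < k then (ε * (eLpNorm (bb 1) ⊤ μ / eLpNorm (bb 1) 2 μ)) / k else 0)
        ≤ (if m / 4 < k then
            alphaSeq μ F bb k * christoffel μ (Vspan bb (4 * k)) / (k : ℝ≥0∞) else 0) := by
      intro k
      by_cases hk : m < k
      · rw [if_pos hk, if_pos (lt_of_le_of_lt (Nat.div_le_self m 4) hk)]
        refine ENNReal.div_le_div ?_ le_rfl
        exact mul_le_mul' (hno k hk) (hc4le k (by omega))
      · rw [if_neg hk]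
        exact zero_le
    have htop : S = ⊤ := by
      rw [hS]
      refine top_le_iff.1 ?_
      calc (⊤ : ℝ≥0∞) = ∑' k : ℕ,
          (if m < k then (ε * (eLpNorm (bb 1) ⊤ μ / eLpNorm (bb 1) 2 μ)) / k else 0) :=
            (harmonic_top _ (mul_ne_zero hε.ne' hc4) m).symm
        _ ≤ _ := ENNReal.tsum_le_tsum hlow
    exact hfin htop
  have hαlim : Filter.Tendsto (fun j => alphaSeq μ F bb (2^j*m)) Filter.atTop (nhds 0) := by
    rw [ENNReal.tendsto_atTop_zero]
    intro ε hε
    obtain ⟨k, hkm, hk⟩ := hinf ε hε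
    refine ⟨k, fun j hj => ?_⟩
    refine le_trans (hαa ?_) hk.le
    calc k ≤ 2^k := (Nat.lt_two_pow_self (n := k)).le
      _ ≤ 2^j := Nat.pow_le_pow_right (by norm_num) hj
      _ ≤ 2^j*m := Nat.le_mul_of_pos_right _ (by omega)
  -- representatives of projections
  have hrep2 : ∀ j : ℕ, ∃ h, h ∈ Vspan bb (2^j*m) ∧
      h =ᵐ[μ] ((Submodule.orthogonalProjectionOnto (K (2^j*m)) fL : Lp ℂ 2 μ) : D → ℂ) := by
    intro j
    obtain ⟨h, hmem, hae⟩ := hrepr (2^j*m) _ (SetLike.coe_mem (Submodule.orthogonalProjectionOnto (K (2^j*m)) fL))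
    exact ⟨h, hmem, hae⟩
  choose hh hhmem hhae using hrep2
  have hpow_le : ∀ j : ℕ, 2^j*m ≤ 2^(j+1)*m :=
    fun j => Nat.mul_le_mul_right m (Nat.pow_le_pow_right (by norm_num) (by omega))
  -- L2 bound on increments
  have hd2 : ∀ j : ℕ, eLpNorm (fun x => hh (j+1) x - hh j x) 2 μ ≤ alphaSeq μ F bb (2^j*m) := by
    intro j
    set P₀ : Lp ℂ 2 μ := (Submodule.orthogonalProjectionOnto (K (2^j*m)) fL : Lp ℂ 2 μ) with hP₀
    set P₁ : Lp ℂ 2 μ := (Submodule.orthogonalProjectionOnto (K (2^(j+1)*m)) fL : Lp ℂ 2 μ) with hP₁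
    have he : eLpNorm (fun x => hh (j+1) x - hh j x) 2 μ = (‖P₁ - P₀‖₊ : ℝ≥0∞) := by
      rw [ennnorm]
      refine eLpNorm_congr_ae ?_
      filter_upwards [hhae j, hhae (j+1), Lp.coeFn_sub P₁ P₀] with x h1 h2 h3
      rw [h3, Pi.sub_apply, h1, h2]
    have hmemP : P₀ ∈ K (2^(j+1)*m) := Kmono (hpow_le j) (SetLike.coe_mem _)
    have hQ : (Submodule.orthogonalProjectionOnto (K (2^(j+1)*m)) (fL - P₀) : Lp ℂ 2 μ) = P₁ - P₀ := by
      rw [map_sub]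
      push_cast
      rw [show (Submodule.orthogonalProjectionOnto (K (2^(j+1)*m)) P₀ : Lp ℂ 2 μ) = P₀ from Submodule.starProjection_eq_self_iff.2 hmemP]
    have hnorm : ‖P₁ - P₀‖ ≤ ‖fL - P₀‖ := by
      rw [← hQ]
      exact hcontr _ _
    rw [he]
    refine le_trans ?_ (hperr (2^j*m))
    refine ENNReal.coe_le_coe.2 ?_
    rw [← NNReal.coe_le_coe]
    simpa [hP₀] using hnorm
  -- L∞ bound on increments
  have hdinf : ∀ j : ℕ, eLpNorm (fun x => hh (j+1) x - hh j x) ⊤ μ ≤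
      alphaSeq μ F bb (2^j*m) * christoffel μ (Vspan bb (2^(j+1)*m)) := by
    intro j
    have hmemd : (fun x => hh (j+1) x - hh j x) ∈ Vspan bb (2^(j+1)*m) := by
      exact Submodule.sub_mem _ (hhmem (j+1)) (Vspan_mono bb (hpow_le j) (hhmem j))
    calc eLpNorm (fun x => hh (j+1) x - hh j x) ⊤ μ
        ≤ christoffel μ (Vspan bb (2^(j+1)*m)) * eLpNorm (fun x => hh (j+1) x - hh j x) 2 μ :=
          christoffel_bound hmemd (hsp hmemd)
      _ ≤ christoffel μ (Vspan bb (2^(j+1)*m)) * alphaSeq μ F bb (2^j*m) :=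
          mul_le_mul_right (hd2 j) _
      _ = alphaSeq μ F bb (2^j*m) * christoffel μ (Vspan bb (2^(j+1)*m)) := mul_comm _ _
  -- sum of L∞ increments bounded by 2 * S
  have hT2S : (∑' j : ℕ, eLpNorm (fun x => hh (j+1) x - hh j x) ⊤ μ) ≤ 2 * S := by
    set t : ℕ → ℝ≥0∞ := fun k => if m / 4 < k then
        alphaSeq μ F bb k * christoffel μ (Vspan bb (4 * k)) / (k : ℝ≥0∞) else 0 with htdef
    have hlowblock : ∀ j : ℕ, ∀ k ∈ Finset.Ioc (2^j*m/2) (2^j*m),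
        (alphaSeq μ F bb (2^j*m) * christoffel μ (Vspan bb (2^(j+1)*m))) / ((2^j*m : ℕ) : ℝ≥0∞)
          ≤ t k := by
      intro j k hk
      rw [Finset.mem_Ioc] at hk
      have hmn : m ≤ 2^j*m := Nat.le_mul_of_pos_left m (by positivity)
      have h2n : 2^(j+1)*m = 2*(2^j*m) := by rw [pow_succ]; ring
      rw [htdef]
      have hm4k : m / 4 < k := by
        have h1 := hk.1
        have h2 := hk.2
        omega
      simp only [if_pos hm4k]
      refine ENNReal.div_le_div ?_ (Nat.cast_le.2 hk.2)
      refine mul_le_mul' (hαa hk.2) (hΛm ?_)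
      rw [h2n]
      have h1 := hk.1
      omega
    calc (∑' j : ℕ, eLpNorm (fun x => hh (j+1) x - hh j x) ⊤ μ)
        ≤ ∑' j : ℕ, alphaSeq μ F bb (2^j*m) * christoffel μ (Vspan bb (2^(j+1)*m)) :=
          ENNReal.tsum_le_tsum hdinf
      _ ≤ ∑' j : ℕ, 2 * ∑ k ∈ Finset.Ioc (2^j*m/2) (2^j*m), t k :=
          ENNReal.tsum_le_tsum (fun j => pow_block_le t m hm j _ (hlowblock j))
      _ = 2 * ∑' j : ℕ, ∑ k ∈ Finset.Ioc (2^j*m/2) (2^j*m), t k := ENNReal.tsum_mul_left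
      _ ≤ 2 * ∑' k : ℕ, t k := mul_le_mul_right (tsum_blocks_le t m hm) 2
      _ = 2 * S := by rw [hS]
  -- a.e. convergence along a subsequence
  have hconv : Filter.Tendsto (fun j => eLpNorm (hh j - f) 2 μ) Filter.atTop (nhds 0) := by
    have hbnd : ∀ j : ℕ, eLpNorm (hh j - f) 2 μ ≤ alphaSeq μ F bb (2^j*m) := by
      intro j
      have he : eLpNorm (hh j - f) 2 μ =
          (‖fL - (Submodule.orthogonalProjectionOnto (K (2^j*m)) fL : Lp ℂ 2 μ)‖₊ : ℝ≥0∞) := by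
        rw [← nnnorm_neg, neg_sub, ennnorm]
        refine eLpNorm_congr_ae ?_
        filter_upwards [hhae j, hfLae,
          Lp.coeFn_sub ((Submodule.orthogonalProjectionOnto (K (2^j*m)) fL : Lp ℂ 2 μ)) fL] with x h1 h2 h3
        rw [Pi.sub_apply, h3, Pi.sub_apply, h1, h2]
      rw [he]
      exact hperr (2^j*m)
    refine tendsto_of_tendsto_of_tendsto_of_le_of_le tendsto_const_nhds hαlim
      (fun j => zero_le) hbnd
  have hTIM : TendstoInMeasure μ (fun j => hh j) Filter.atTop f :=
    tendstoInMeasure_of_tendsto_eLpNorm (p := 2) two_ne_zero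
      (fun j => (hsp (hhmem j)).1) (hFL2 f hf).1 hconv
  obtain ⟨ns, hnsmono, haec⟩ := hTIM.exists_seq_tendsto_ae
  have hae_bound : ∀ᵐ x ∂μ, ∀ j : ℕ, (‖hh (j+1) x - hh j x‖₊ : ℝ≥0∞) ≤
      eLpNorm (fun y => hh (j+1) y - hh j y) ⊤ μ := by
    rw [MeasureTheory.ae_all_iff]
    intro j
    rw [eLpNorm_exponent_top]
    exact ae_le_eLpNormEssSup
  set T := ∑' j : ℕ, eLpNorm (fun x => hh (j+1) x - hh j x) ⊤ μ with hTdef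
  have key_ae : ∀ᵐ x ∂μ, (‖f x - hh 0 x‖₊ : ℝ≥0∞) ≤ T := by
    filter_upwards [haec, hae_bound] with x hx hbx
    have hstep : ∀ N : ℕ, (‖hh N x - hh 0 x‖₊ : ℝ≥0∞) ≤ T := by
      intro N
      have htel : hh N x - hh 0 x = ∑ j ∈ Finset.range N, (hh (j+1) x - hh j x) :=
        (Finset.sum_range_sub (fun j => hh j x) N).symm
      rw [htel]
      calc ((‖∑ j ∈ Finset.range N, (hh (j+1) x - hh j x)‖₊ : ℝ≥0) : ℝ≥0∞)
          ≤ ((∑ j ∈ Finset.range N, ‖hh (j+1) x - hh j x‖₊ : ℝ≥0) : ℝ≥0∞) :=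
            ENNReal.coe_le_coe.2 (nnnorm_sum_le _ _)
        _ = ∑ j ∈ Finset.range N, ((‖hh (j+1) x - hh j x‖₊ : ℝ≥0) : ℝ≥0∞) := by
            rw [ENNReal.coe_finset_sum]
        _ ≤ ∑ j ∈ Finset.range N, eLpNorm (fun y => hh (j+1) y - hh j y) ⊤ μ :=
            Finset.sum_le_sum (fun j _ => hbx j)
        _ ≤ T := ENNReal.sum_le_tsum _
    have hlim : Filter.Tendsto (fun i => (‖hh (ns i) x - hh 0 x‖₊ : ℝ≥0∞)) Filter.atTop
        (nhds (‖f x - hh 0 x‖₊ : ℝ≥0∞)) := by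
      refine ENNReal.tendsto_coe.2 ?_
      exact (hx.sub tendsto_const_nhds).nnnorm
    exact le_of_tendsto hlim (Filter.Eventually.of_forall (fun i => hstep (ns i)))
  have hfh0 : eLpNorm (fun x => f x - hh 0 x) ⊤ μ ≤ T := by
    rw [eLpNorm_exponent_top, eLpNormEssSup]
    exact essSup_le_of_ae_le _ key_ae
  -- final assembly
  have hm0 : (2^0*m) = m := by norm_num
  have hh0mem : hh 0 ∈ Vspan bb m := hm0 ▸ hhmem 0
  have hAf : A f ∈ Vspan bb m := hA f hf
  set AfL : Lp ℂ 2 μ := (hsp hAf).toLp (A f) with hAfLdef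
  have hAfae : (AfL : D → ℂ) =ᵐ[μ] A f := MemLp.coeFn_toLp _
  have hAfK : AfL ∈ K (2^0*m) := by
    rw [hm0]
    obtain ⟨u, huK, hau⟩ := htoK m (A f) hAf
    have : AfL = u := Lp.ext (hAfae.trans hau)
    rw [this]
    exact huK
  have hsecond : eLpNorm (fun x => hh 0 x - A f x) ⊤ μ ≤
      christoffel μ (Vspan bb m) * eLpNorm (fun x => f x - A f x) 2 μ := by
    have hmemd0 : (fun x => hh 0 x - A f x) ∈ Vspan bb m :=
      Submodule.sub_mem _ hh0mem hAf
    have step1 : eLpNorm (fun x => hh 0 x - A f x) ⊤ μ ≤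
        christoffel μ (Vspan bb m) * eLpNorm (fun x => hh 0 x - A f x) 2 μ :=
      christoffel_bound hmemd0 (hsp hmemd0)
    refine step1.trans (mul_le_mul_right ?_ _)
    -- ‖hh 0 - A f‖₂ ≤ ‖f - A f‖₂
    set P₀ : Lp ℂ 2 μ := (Submodule.orthogonalProjectionOnto (K (2^0*m)) fL : Lp ℂ 2 μ) with hP₀
    have e1 : eLpNorm (fun x => hh 0 x - A f x) 2 μ = (‖P₀ - AfL‖₊ : ℝ≥0∞) := by
      rw [ennnorm]
      refine eLpNorm_congr_ae ?_
      filter_upwards [hhae 0, hAfae, Lp.coeFn_sub P₀ AfL] with x h1 h2 h3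
      rw [h3, Pi.sub_apply, h1, h2]
    have e2 : eLpNorm (fun x => f x - A f x) 2 μ = (‖fL - AfL‖₊ : ℝ≥0∞) := by
      rw [ennnorm]
      refine eLpNorm_congr_ae ?_
      filter_upwards [hfLae, hAfae, Lp.coeFn_sub fL AfL] with x h1 h2 h3
      rw [h3, Pi.sub_apply, h1, h2]
    rw [e1, e2]
    refine ENNReal.coe_le_coe.2 ?_
    rw [← NNReal.coe_le_coe]
    have hQ : (Submodule.orthogonalProjectionOnto (K (2^0*m)) (fL - AfL) : Lp ℂ 2 μ) = P₀ - AfL := by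
      rw [map_sub, Submodule.coe_sub]
      rw [show (Submodule.orthogonalProjectionOnto (K (2^0*m)) AfL : Lp ℂ 2 μ) = AfL from Submodule.starProjection_eq_self_iff.2 hAfK]
    have : ‖P₀ - AfL‖ ≤ ‖fL - AfL‖ := by
      rw [← hQ]
      exact hcontr _ _
    simpa using this
  have hfirst : eLpNorm (fun x => f x - hh 0 x) ⊤ μ ≤ 2 * S := hfh0.trans hT2S
  have hsplit : eLpNorm (fun x => f x - A f x) ⊤ μ ≤
      eLpNorm (fun x => f x - hh 0 x) ⊤ μ + eLpNorm (fun x => hh 0 x - A f x) ⊤ μ := by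
    have hfun : (fun x => f x - A f x) =
        (fun x => f x - hh 0 x) + (fun x => hh 0 x - A f x) := by
      funext x
      simp only [Pi.add_apply]
      ring
    rw [hfun]
    exact eLpNorm_add_le ((hFL2 f hf).1.sub (hsp hh0mem).1)
      ((hsp hh0mem).1.sub (hsp hAf).1) le_top
  exact hsplit.trans (add_le_add hfirst hsecond)
end

section
/- In the general setting, assume Σ_{j>⌊m/4⌋} α_j·Λ_{4j}/j < ∞. Then for every f ∈ F, the series Σ_{k>m} ⟨f, b_k⟩_{L₂(μ)}·b_k converges uniformly up to a μ-null set, f agrees μ-almost everywhere with P_{V_m} f plus this series, and ‖f − P_{V_m} f‖_{L_∞(μ)} ≤ 2·Σ_{j>⌊m/4⌋} α_j·Λ_{4j}/j. -/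
open MeasureTheory ENNReal

/-- The `L₂(μ)`-Fourier coefficient `⟨f, b_k⟩ = ∫ conj(b_k) f dμ`, so that the orthogonal
projection of `f` onto `V_m` is `P_m f = ∑_{k=1}^m ⟨f, b_k⟩ b_k`. -/
noncomputable def fourCoeff {D : Type*} [MeasurableSpace D] (μ : Measure D)
    (b : ℕ → D → ℂ) (f : D → ℂ) (k : ℕ) : ℂ :=
  ∫ x, (starRingEnd ℂ) (b k x) * f x ∂μ

/-! ### Auxiliary material -/

/-- partial block sums of the orthogonal series, as pointwise functions -/
noncomputable def Qb {D : Type*} (bb : ℕ → D → ℂ) (c : ℕ → ℂ) (a b : ℕ) (x : D) : ℂ :=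
  ∑ k ∈ Finset.Ioc a b, c k * bb k x

local notation "⟪" x ", " y "⟫" => @inner ℂ _ _ x y

lemma aux_coeFn_sum {α E ι : Type*} [MeasurableSpace α] {μ : Measure α}
    [NormedAddCommGroup E] {p : ℝ≥0∞} (s : Finset ι) (f : ι → Lp E p μ) :
    ⇑(∑ i ∈ s, f i) =ᵐ[μ] fun x => ∑ i ∈ s, (f i : α → E) x := by
  classical
  induction s using Finset.induction with
  | empty => simp only [Finset.sum_empty]; exact Lp.coeFn_zero E p μ
  | @insert a s h ih =>
      rw [Finset.sum_insert h]
      refine (Lp.coeFn_add _ _).trans ?_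
      filter_upwards [ih] with x hx
      rw [Finset.sum_insert h, Pi.add_apply, hx]

lemma aux_sum_ae {α E ι : Type*} [MeasurableSpace α] {μ : Measure α}
    [AddCommMonoid E] (s : Finset ι) {f g : ι → α → E}
    (h : ∀ i ∈ s, f i =ᵐ[μ] g i) :
    (fun x => ∑ i ∈ s, f i x) =ᵐ[μ] fun x => ∑ i ∈ s, g i x := by
  classical
  induction s using Finset.induction with
  | empty => simp
  | @insert a s hns ih =>
      have h1 : f a =ᵐ[μ] g a := h a (Finset.mem_insert_self _ _)
      have h2 := ih fun i hi => h i (Finset.mem_insert_of_mem hi)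
      filter_upwards [h1, h2] with x hx1 hx2
      simp [Finset.sum_insert hns, hx1, hx2]

lemma aux_pyth {E : Type*} [NormedAddCommGroup E] [InnerProductSpace ℂ E]
    (u v : E) (h : ⟪u, v⟫ = 0) : ‖u‖ ≤ ‖u + v‖ ∧ ‖v‖ ≤ ‖u + v‖ := by
  have hsq := norm_add_sq_eq_norm_sq_add_norm_sq_of_inner_eq_zero u v h
  constructor <;> nlinarith [norm_nonneg u, norm_nonneg v, norm_nonneg (u + v)]

set_option maxHeartbeats 2000000 in
/-- **Lemma (uniform convergence of the tail of the projection series).**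
In the general setting, if `∑_{j>⌊m/4⌋} α_j Λ_{4j}/j < ∞`, then for every `f ∈ F` the
series `∑_{k>m} ⟨f, b_k⟩ b_k` converges uniformly off a `μ`-null set to some `g`, one has
`f = P_{V_m} f + g` `μ`-a.e., and `‖f - P_{V_m} f‖_{L_∞(μ)} ≤ 2 ∑_{j>⌊m/4⌋} α_j Λ_{4j}/j`. -/
theorem stmt6 {D : Type*} [MeasurableSpace D] (μ : Measure D)
    (bb : ℕ → D → ℂ)
    (hmeas : ∀ k, Measurable (bb k))
    (hbdd : ∀ k, ∃ M : ℝ, ∀ x, ‖bb k x‖ ≤ M)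
    (hON : ∀ j k, 1 ≤ j → 1 ≤ k →
      ∫ x, (starRingEnd ℂ) (bb j x) * bb k x ∂μ = if j = k then 1 else 0)
    (F : Set (D → ℂ))
    (hFbdd : ∀ f ∈ F, ∃ M : ℝ, ∀ x, ‖f x‖ ≤ M)
    (hFmeas : ∀ f ∈ F, Measurable f)
    (hFL2 : ∀ f ∈ F, MemLp f 2 μ)
    (m : ℕ) (hm : 1 ≤ m)
    (hfin : (∑' j : ℕ, if m / 4 < j then
        alphaSeq μ F bb j * christoffel μ (Vspan bb (4 * j)) / (j : ℝ≥0∞) else 0) ≠ ⊤)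
    (f : D → ℂ) (hf : f ∈ F) :
    ∃ (g : D → ℂ) (N : Set D), μ N = 0 ∧
      TendstoUniformlyOn
        (fun (n : ℕ) (x : D) => ∑ k ∈ Finset.Icc (m + 1) n, fourCoeff μ bb f k * bb k x)
        g Filter.atTop Nᶜ ∧
      (∀ᵐ x ∂μ,
        f x = (∑ k ∈ Finset.Icc 1 m, fourCoeff μ bb f k * bb k x) + g x) ∧
      eLpNorm (fun x => f x - ∑ k ∈ Finset.Icc 1 m, fourCoeff μ bb f k * bb k x) ⊤ μ ≤
        2 * ∑' j : ℕ, (if m / 4 < j then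
          alphaSeq μ F bb j * christoffel μ (Vspan bb (4 * j)) / (j : ℝ≥0∞) else 0) := by
  classical
  -- rewrite `Icc` as `Ioc` in the goal
  have hIcc1 : ∀ n : ℕ, Finset.Icc 1 n = Finset.Ioc 0 n := by
    intro n; ext k; simp only [Finset.mem_Icc, Finset.mem_Ioc]; omega
  have hIcc2 : ∀ n : ℕ, Finset.Icc (m+1) n = Finset.Ioc m n := by
    intro n; ext k; simp only [Finset.mem_Icc, Finset.mem_Ioc]; omega
  simp only [hIcc1, hIcc2]
  set c : ℕ → ℂ := fourCoeff μ bb f with hc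
  set aj : ℕ → ℝ≥0∞ := fun j => if m / 4 < j then
      alphaSeq μ F bb j * christoffel μ (Vspan bb (4 * j)) / (j : ℝ≥0∞) else 0 with haj
  -- membership of the basis functions in L²
  have hm4 : ∀ k, 1 ≤ k → MemLp (bb k) 2 μ := by
    intro k hk
    have h1 := hON k k hk hk
    rw [if_pos rfl] at h1
    have hint : Integrable (fun x => (starRingEnd ℂ) (bb k x) * bb k x) μ := by
      by_contra hni
      rw [integral_undef hni] at h1
      exact one_ne_zero h1.symm
    have hsq : Integrable (fun x => ‖bb k x‖ ^ 2) μ := by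
      have := hint.re
      refine this.congr (Filter.Eventually.of_forall fun x => ?_)
      show RCLike.re ((starRingEnd ℂ) (bb k x) * bb k x) = ‖bb k x‖ ^ 2
      rw [RCLike.conj_mul]
      simp [← Complex.ofReal_pow]
    exact (memLp_two_iff_integrable_sq_norm (hmeas k).aestronglyMeasurable).mpr hsq
  have hfL2 : MemLp f 2 μ := hFL2 f hf
  set B : ℕ → Lp ℂ 2 μ := fun k => if h : 1 ≤ k then MemLp.toLp (bb k) (hm4 k h) else 0
    with hBdef
  have hBcoe : ∀ k, 1 ≤ k → ⇑(B k) =ᵐ[μ] bb k := by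
    intro k hk
    rw [hBdef]; simp only [dif_pos hk]
    exact MemLp.coeFn_toLp _
  set fL : Lp ℂ 2 μ := MemLp.toLp f hfL2 with hfLdef
  have hfLcoe : ⇑fL =ᵐ[μ] f := MemLp.coeFn_toLp _
  -- inner products
  have hBB : ∀ j k, 1 ≤ j → 1 ≤ k → ⟪B j, B k⟫ = if j = k then (1:ℂ) else 0 := by
    intro j k hj hk
    rw [MeasureTheory.L2.inner_def, ← hON j k hj hk]
    apply integral_congr_ae
    filter_upwards [hBcoe j hj, hBcoe k hk] with x h1 h2
    rw [h1, h2]; exact RCLike.inner_apply' _ _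
  have hfc : ∀ k, 1 ≤ k → ⟪B k, fL⟫ = c k := by
    intro k hk
    rw [MeasureTheory.L2.inner_def, hc]
    apply integral_congr_ae
    filter_upwards [hBcoe k hk, hfLcoe] with x h1 h2
    rw [h1, h2]; exact RCLike.inner_apply' _ _
  -- partial sums in L²
  set Sv : ℕ → Lp ℂ 2 μ := fun n => ∑ k ∈ Finset.Ioc 0 n, c k • B k with hSvdef
  have hSvcoe : ∀ n, ⇑(Sv n) =ᵐ[μ] Qb bb c 0 n := by
    intro n
    refine (aux_coeFn_sum _ _).trans ?_
    refine (aux_sum_ae _ fun k hk => ?_ : _ =ᵐ[μ] fun x => ∑ k ∈ Finset.Ioc 0 n, c k * bb k x)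
    have hk1 : 1 ≤ k := (Finset.mem_Ioc.mp hk).1
    refine (Lp.coeFn_smul _ _).trans ?_
    filter_upwards [hBcoe k hk1] with x hx
    simp [hx]
  set spanE : ℕ → Submodule ℂ (Lp ℂ 2 μ) :=
    fun n => Submodule.span ℂ (B '' Set.Icc 1 n) with hspanEdef
  have hspanEmono : ∀ {n1 n2 : ℕ}, n1 ≤ n2 → spanE n1 ≤ spanE n2 := by
    intro n1 n2 h
    exact Submodule.span_mono (Set.image_mono (Set.Icc_subset_Icc_right h))
  have hSvmem : ∀ n, Sv n ∈ spanE n := by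
    intro n
    refine Submodule.sum_mem _ fun k hk => Submodule.smul_mem _ _ (Submodule.subset_span ?_)
    rw [Finset.mem_Ioc] at hk
    exact ⟨k, ⟨hk.1, hk.2⟩, rfl⟩
  -- orthogonality of the residual
  have horthS : ∀ n k, 1 ≤ k → k ≤ n → ⟪B k, fL - Sv n⟫ = 0 := by
    intro n k hk1 hk2
    rw [inner_sub_right, hfc k hk1, hSvdef]
    have : ⟪B k, ∑ j ∈ Finset.Ioc 0 n, c j • B j⟫ = c k := by
      rw [inner_sum]
      rw [Finset.sum_eq_single k]
      · rw [inner_smul_right, hBB k k hk1 hk1, if_pos rfl, mul_one]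
      · intro j hj hjk
        rw [inner_smul_right, hBB k j hk1 (Finset.mem_Ioc.mp hj).1, if_neg (Ne.symm hjk),
          mul_zero]
      · intro hk
        exact absurd (Finset.mem_Ioc.mpr ⟨hk1, hk2⟩) hk
    rw [this, sub_self]
  have hspanOrth : ∀ n (v : Lp ℂ 2 μ), v ∈ spanE n → ⟪v, fL - Sv n⟫ = 0 := by
    intro n v hv
    rw [hspanEdef] at hv
    induction hv using Submodule.span_induction with
    | mem w hw =>
        obtain ⟨k, hk, rfl⟩ := hw
        exact horthS n k hk.1 hk.2
    | zero => exact inner_zero_left _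
    | add x y hx hy ihx ihy => rw [inner_add_left, ihx, ihy, add_zero]
    | smul a x hx ihx => rw [inner_smul_left, ihx, mul_zero]
  have hspanOrth' : ∀ n (v : Lp ℂ 2 μ), v ∈ spanE n → ⟪fL - Sv n, v⟫ = 0 := by
    intro n v hv
    rw [← inner_conj_symm, hspanOrth n v hv, map_zero]
  -- the two Pythagoras consequences
  have hprojLe : ∀ n (v : Lp ℂ 2 μ), v ∈ spanE n → ‖fL - Sv n‖ ≤ ‖fL - v‖ := by
    intro n v hv
    have h0 : ⟪fL - Sv n, Sv n - v⟫ = 0 := hspanOrth' n _ (sub_mem (hSvmem n) hv)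
    have := (aux_pyth _ _ h0).1
    have heq : fL - Sv n + (Sv n - v) = fL - v := by abel
    rwa [heq] at this
  have hblock2 : ∀ a b : ℕ, a ≤ b → ‖Sv b - Sv a‖ ≤ ‖fL - Sv a‖ := by
    intro a b hab
    have hmem : Sv b - Sv a ∈ spanE b := sub_mem (hSvmem b) (hspanEmono hab (hSvmem a))
    have h0 : ⟪fL - Sv b, Sv b - Sv a⟫ = 0 := hspanOrth' b _ hmem
    have := (aux_pyth _ _ h0).2
    have heq : fL - Sv b + (Sv b - Sv a) = fL - Sv a := by abel
    rwa [heq] at this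
  -- norm translations
  have hLp2 : ∀ u : Lp ℂ 2 μ, eLpNorm (⇑u) 2 μ = ENNReal.ofReal ‖u‖ := by
    intro u
    rw [Lp.norm_def, ENNReal.ofReal_toReal (Lp.eLpNorm_ne_top u)]
  have hQvcoe : ∀ a b : ℕ, a ≤ b → ⇑(Sv b - Sv a) =ᵐ[μ] Qb bb c a b := by
    intro a b hab
    have hsum : ∀ x : D, Qb bb c 0 a x + Qb bb c a b x = Qb bb c 0 b x := fun x =>
      Finset.sum_Ioc_consecutive _ (Nat.zero_le a) hab
    refine (Lp.coeFn_sub _ _).trans ?_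
    filter_upwards [hSvcoe a, hSvcoe b] with x hxa hxb
    simp only [Pi.sub_apply, hxa, hxb]
    rw [← hsum x]; ring
  have hA : ∀ n, eLpNorm (fun x => f x - Qb bb c 0 n x) 2 μ = ENNReal.ofReal ‖fL - Sv n‖ := by
    intro n
    rw [← hLp2 (fL - Sv n)]
    refine eLpNorm_congr_ae ?_
    filter_upwards [hfLcoe, hSvcoe n, Lp.coeFn_sub fL (Sv n)] with x h1 h2 h3
    rw [h3, Pi.sub_apply, h1, h2]
  have hQ2 : ∀ a b : ℕ, a ≤ b →
      eLpNorm (Qb bb c a b) 2 μ = ENNReal.ofReal ‖Sv b - Sv a‖ := by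
    intro a b hab
    rw [← hLp2 (Sv b - Sv a)]
    exact eLpNorm_congr_ae (hQvcoe a b hab).symm
  -- elements of `Vspan` are in L² and correspond to elements of `spanE`
  have hVL2 : ∀ n g, g ∈ Vspan bb n → ∃ hg : MemLp g 2 μ, MemLp.toLp g hg ∈ spanE n := by
    intro n g hg
    rw [Vspan] at hg
    induction hg using Submodule.span_induction with
    | mem w hw =>
        obtain ⟨k, hk, rfl⟩ := hw
        refine ⟨hm4 k hk.1, ?_⟩
        have : MemLp.toLp (bb k) (hm4 k hk.1) = B k := by rw [hBdef]; simp [dif_pos hk.1]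
        rw [this]
        exact Submodule.subset_span ⟨k, hk, rfl⟩
    | zero =>
        refine ⟨MemLp.zero, ?_⟩
        rw [MemLp.toLp_zero]
        exact zero_mem _
    | add x y hx hy ihx ihy =>
        obtain ⟨h1, hm1⟩ := ihx
        obtain ⟨h2, hm2⟩ := ihy
        refine ⟨h1.add h2, ?_⟩
        rw [MemLp.toLp_add h1 h2]
        exact add_mem hm1 hm2
    | smul a x hx ihx =>
        obtain ⟨h1, hm1⟩ := ihx
        refine ⟨h1.const_smul a, ?_⟩
        rw [MemLp.toLp_const_smul a h1]
        exact Submodule.smul_mem _ _ hm1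
  -- the L² error of the partial sum is at most `α_n`
  have hproj : ∀ n, eLpNorm (fun x => f x - Qb bb c 0 n x) 2 μ ≤ alphaSeq μ F bb n := by
    intro n
    have h1 : eLpNorm (fun x => f x - Qb bb c 0 n x) 2 μ ≤
        ⨅ g ∈ Vspan bb n, eLpNorm (fun x => f x - g x) 2 μ := by
      refine le_iInf₂ fun g hg => ?_
      obtain ⟨hgL2, hgmem⟩ := hVL2 n g hg
      have h2 : eLpNorm (fun x => f x - g x) 2 μ = ENNReal.ofReal ‖fL - MemLp.toLp g hgL2‖ := by
        rw [← hLp2 (fL - MemLp.toLp g hgL2)]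
        refine eLpNorm_congr_ae ?_
        filter_upwards [hfLcoe, MemLp.coeFn_toLp hgL2, Lp.coeFn_sub fL (MemLp.toLp g hgL2)]
          with x ha hb hcc
        rw [hcc, Pi.sub_apply, ha, hb]
      rw [hA n, h2]
      exact ENNReal.ofReal_le_ofReal (hprojLe n _ hgmem)
    refine h1.trans ?_
    exact le_iSup₂ (f := fun h (_ : h ∈ F) => ⨅ g ∈ Vspan bb n, eLpNorm (fun x => h x - g x) 2 μ)
      f hf
  -- blocks lie in `Vspan` and obey the Christoffel bound
  have hQmeas : ∀ a b : ℕ, Measurable (Qb bb c a b) := by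
    intro a b
    exact Finset.measurable_sum _ fun k _ => (hmeas k).const_mul (c k)
  have hQmemV : ∀ (nn a b : ℕ), b ≤ nn → Qb bb c a b ∈ Vspan bb nn := by
    intro nn a b hb
    have hQeq : Qb bb c a b = ∑ k ∈ Finset.Ioc a b, c k • bb k := by
      funext x
      rw [Qb, Finset.sum_apply]
      rfl
    rw [hQeq]
    refine Submodule.sum_mem _ fun k hk => Submodule.smul_mem _ _ (Submodule.subset_span ?_)
    rw [Finset.mem_Ioc] at hk
    exact ⟨k, ⟨by omega, le_trans hk.2 hb⟩, rfl⟩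
  have hchris : ∀ (nn a b : ℕ), a ≤ b → b ≤ nn →
      eLpNorm (Qb bb c a b) ⊤ μ ≤
        christoffel μ (Vspan bb nn) * eLpNorm (fun x => f x - Qb bb c 0 a x) 2 μ := by
    intro nn a b hab hb
    have h2ne : eLpNorm (Qb bb c a b) 2 μ ≠ ⊤ := by
      rw [hQ2 a b hab]; exact ENNReal.ofReal_ne_top
    have hle : eLpNorm (Qb bb c a b) ⊤ μ / eLpNorm (Qb bb c a b) 2 μ ≤
        christoffel μ (Vspan bb nn) :=
      le_iSup₂ (f := fun g (_ : g ∈ Vspan bb nn) => eLpNorm g ⊤ μ / eLpNorm g 2 μ)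
        (Qb bb c a b) (hQmemV nn a b hb)
    rcases eq_or_ne (eLpNorm (Qb bb c a b) 2 μ) 0 with h0 | h0
    · have hz : Qb bb c a b =ᵐ[μ] 0 :=
        (eLpNorm_eq_zero_iff (hQmeas a b).aestronglyMeasurable (by norm_num)).mp h0
      have : eLpNorm (Qb bb c a b) ⊤ μ = 0 := by
        rw [eLpNorm_congr_ae hz, eLpNorm_zero]
      rw [this]
      exact zero_le
    · have h3 := (ENNReal.div_le_iff h0 h2ne).mp hle
      refine h3.trans ?_
      refine mul_le_mul_right ?_ _
      rw [hQ2 a b hab, hA a]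
      exact ENNReal.ofReal_le_ofReal (hblock2 a b hab)
  -- monotonicity of Λ and α
  have hVmono : ∀ {n1 n2 : ℕ}, n1 ≤ n2 → Vspan bb n1 ≤ Vspan bb n2 := by
    intro n1 n2 h
    exact Submodule.span_mono (Set.image_mono (Set.Icc_subset_Icc_right h))
  have hLmono : ∀ {n1 n2 : ℕ}, n1 ≤ n2 →
      christoffel μ (Vspan bb n1) ≤ christoffel μ (Vspan bb n2) := by
    intro n1 n2 h
    refine iSup₂_le fun g hg => ?_
    exact le_iSup₂ (f := fun g (_ : g ∈ Vspan bb n2) => eLpNorm g ⊤ μ / eLpNorm g 2 μ)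
      g (hVmono h hg)
  have hamono : ∀ {n1 n2 : ℕ}, n1 ≤ n2 → alphaSeq μ F bb n2 ≤ alphaSeq μ F bb n1 := by
    intro n1 n2 h
    refine iSup₂_le fun u hu => ?_
    refine le_iSup₂_of_le u hu ?_
    exact le_iInf₂ fun g hg => iInf₂_le g (hVmono h hg)
  -- dyadic weights
  set w : ℕ → ℝ≥0∞ := fun s =>
    christoffel μ (Vspan bb (2 ^ (s + 1) * m)) * alphaSeq μ F bb (2 ^ s * m) with hwdef
  have hns1 : ∀ s : ℕ, 1 ≤ 2 ^ s * m := fun s =>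
    Nat.one_le_iff_ne_zero.mpr (by positivity)
  have hnsmono : ∀ {s t : ℕ}, s ≤ t → 2 ^ s * m ≤ 2 ^ t * m := fun h =>
    Nat.mul_le_mul_right m (Nat.pow_le_pow_right (by norm_num) h)
  -- the sup-norm bound for blocks
  have Hblock : ∀ s n : ℕ, n ≤ 2 ^ (s + 1) * m →
      eLpNorm (Qb bb c (2 ^ s * m) n) ⊤ μ ≤ w s := by
    intro s n hn
    rcases le_or_gt (2 ^ s * m) n with h | h
    · refine (hchris (2 ^ (s + 1) * m) (2 ^ s * m) n h hn).trans ?_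
      exact mul_le_mul_right (hproj _) _
    · have : Finset.Ioc (2 ^ s * m) n = ∅ := Finset.Ioc_eq_empty (by omega)
      have hz : Qb bb c (2 ^ s * m) n = fun _ => 0 := by
        funext x; rw [Qb, this, Finset.sum_empty]
      rw [hz, show (fun _ : D => (0:ℂ)) = (0 : D → ℂ) from rfl, eLpNorm_zero]
      exact zero_le
  -- the key comparison with the series `∑ aj`
  have Key10 : ∀ s : ℕ,
      w s ≤ 2 * ∑ j ∈ Finset.Ioc (2 ^ s * m / 2) (2 ^ s * m), aj j := by
    intro s
    set ns := 2 ^ s * m with hnsdef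
    have hns : 1 ≤ ns := hns1 s
    have hterm : ∀ j ∈ Finset.Ioc (ns / 2) ns, w s / (ns : ℝ≥0∞) ≤ aj j := by
      intro j hj
      rw [Finset.mem_Ioc] at hj
      have hmj : m / 4 < j := by
        have h1 : m ≤ ns := by rw [hnsdef]; nlinarith [Nat.one_le_two_pow (n := s)]
        have h2 : m / 4 ≤ ns / 4 := Nat.div_le_div_right h1
        have h3 : ns / 4 ≤ ns / 2 := Nat.div_le_div_left (by norm_num) (by norm_num)
        omega
      have h4j : 2 ^ (s + 1) * m ≤ 4 * j := by
        have : 2 ^ (s + 1) * m = 2 * ns := by rw [hnsdef]; ring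
        omega
      rw [haj]
      simp only [if_pos hmj]
      rw [hwdef]
      refine ENNReal.div_le_div ?_ ?_
      · calc christoffel μ (Vspan bb (2 ^ (s + 1) * m)) * alphaSeq μ F bb ns
            ≤ christoffel μ (Vspan bb (4 * j)) * alphaSeq μ F bb j :=
              mul_le_mul' (hLmono h4j) (hamono hj.2)
          _ = alphaSeq μ F bb j * christoffel μ (Vspan bb (4 * j)) := mul_comm _ _
      · exact Nat.cast_le.mpr hj.2
    have hsum : (↑(ns - ns / 2) : ℝ≥0∞) * (w s / (ns : ℝ≥0∞)) ≤
        ∑ j ∈ Finset.Ioc (ns / 2) ns, aj j := by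
      calc (↑(ns - ns / 2) : ℝ≥0∞) * (w s / (ns : ℝ≥0∞))
          = ∑ _j ∈ Finset.Ioc (ns / 2) ns, w s / (ns : ℝ≥0∞) := by
            rw [Finset.sum_const, Nat.card_Ioc, nsmul_eq_mul]
        _ ≤ ∑ j ∈ Finset.Ioc (ns / 2) ns, aj j := Finset.sum_le_sum hterm
    have hcard : (ns : ℝ≥0∞) ≤ 2 * (↑(ns - ns / 2) : ℝ≥0∞) := by
      have : ns ≤ 2 * (ns - ns / 2) := by omega
      calc (ns : ℝ≥0∞) ≤ (↑(2 * (ns - ns / 2)) : ℝ≥0∞) := Nat.cast_le.mpr this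
        _ = 2 * (↑(ns - ns / 2) : ℝ≥0∞) := by push_cast; ring
    have hws : w s = (ns : ℝ≥0∞) * (w s / (ns : ℝ≥0∞)) := by
      rw [mul_comm, ENNReal.div_mul_cancel (Nat.cast_ne_zero.mpr (by omega))
        (ENNReal.natCast_ne_top ns)]
    calc w s = (ns : ℝ≥0∞) * (w s / (ns : ℝ≥0∞)) := hws
      _ ≤ (2 * (↑(ns - ns / 2) : ℝ≥0∞)) * (w s / (ns : ℝ≥0∞)) :=
          mul_le_mul_left hcard _
      _ = 2 * ((↑(ns - ns / 2) : ℝ≥0∞) * (w s / (ns : ℝ≥0∞))) := by ring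
      _ ≤ 2 * ∑ j ∈ Finset.Ioc (ns / 2) ns, aj j := mul_le_mul_right hsum 2
  -- summing up: `∑ w ≤ 2 ∑ aj`
  have hdisj : ∀ {s t : ℕ}, s < t →
      Disjoint (Finset.Ioc (2 ^ s * m / 2) (2 ^ s * m))
        (Finset.Ioc (2 ^ t * m / 2) (2 ^ t * m)) := by
    intro s t hst
    rw [Finset.disjoint_left]
    intro j hjs hjt
    rw [Finset.mem_Ioc] at hjs hjt
    have h1 : 2 ^ t * m / 2 = 2 ^ (t - 1) * m := by
      have : 2 ^ t = 2 * 2 ^ (t - 1) := by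
        conv_lhs => rw [show t = 1 + (t - 1) by omega]
        rw [pow_add, pow_one]
      rw [this, mul_assoc, Nat.mul_div_cancel_left _ (by norm_num)]
    have h2 : 2 ^ s * m ≤ 2 ^ (t - 1) * m := hnsmono (by omega)
    omega
  have hwsum : ∑' s, w s ≤ 2 * ∑' j, aj j := by
    have h1 : ∑' s, w s ≤ ∑' s, 2 * ∑ j ∈ Finset.Ioc (2 ^ s * m / 2) (2 ^ s * m), aj j :=
      ENNReal.tsum_le_tsum Key10
    rw [ENNReal.tsum_mul_left] at h1
    refine h1.trans (mul_le_mul_right ?_ 2)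
    rw [ENNReal.tsum_eq_iSup_sum]
    refine iSup_le fun T => ?_
    rw [← Finset.sum_biUnion]
    · exact ENNReal.sum_le_tsum _
    · intro x _ y _ hxy
      rcases lt_or_gt_of_ne hxy with h | h
      · exact hdisj h
      · exact (hdisj h).symm
  have hwtop : ∑' s, w s ≠ ⊤ := by
    refine ne_top_of_le_ne_top ?_ hwsum
    exact ENNReal.mul_ne_top (by norm_num) hfin
  -- tails of the weight series
  set eps : ℕ → ℝ≥0∞ := fun s => ∑' t, w (t + s) with hepsdef
  have heps0 : Filter.Tendsto eps Filter.atTop (nhds 0) :=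
    ENNReal.tendsto_sum_nat_add w hwtop
  have hepsmono : ∀ {s t : ℕ}, s ≤ t → eps t ≤ eps s := by
    intro s t hst
    rw [hepsdef]
    have : ∀ u : ℕ, w (u + t) = w ((u + (t - s)) + s) := by
      intro u; congr 1; omega
    simp only [this]
    exact ENNReal.tsum_comp_le_tsum_of_injective
      (add_left_injective (t - s)) (fun u => w (u + s))
  -- the exceptional null set
  set N : Set D := ⋃ p : ℕ × ℕ,
    {x | ¬ (‖Qb bb c p.1 p.2 x‖₊ : ℝ≥0∞) ≤ eLpNormEssSup (Qb bb c p.1 p.2) μ} with hNdef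
  have hNnull : μ N = 0 := by
    refine measure_iUnion_null fun p => ?_
    have h := ae_le_eLpNormEssSup (f := Qb bb c p.1 p.2) (μ := μ)
    rw [MeasureTheory.ae_iff] at h
    exact h
  have hNx : ∀ x, x ∈ Nᶜ → ∀ a b : ℕ,
      (‖Qb bb c a b x‖₊ : ℝ≥0∞) ≤ eLpNorm (Qb bb c a b) ⊤ μ := by
    intro x hx a b
    rw [eLpNorm_exponent_top]
    by_contra hcon
    exact hx (Set.mem_iUnion.mpr ⟨(a, b), hcon⟩)
  -- pointwise estimate for dyadic pieces
  have E1 : ∀ x, x ∈ Nᶜ → ∀ s t n : ℕ, n ≤ 2 ^ (s + t) * m →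
      (‖Qb bb c (2 ^ s * m) n x‖₊ : ℝ≥0∞) ≤ ∑ u ∈ Finset.range t, w (s + u) := by
    intro x hx s t
    induction t with
    | zero =>
        intro n hn
        have : Finset.Ioc (2 ^ s * m) n = ∅ := Finset.Ioc_eq_empty
          (by simp only [Nat.add_zero] at hn; omega)
        rw [Qb, this, Finset.sum_empty]
        simp
    | succ t ih =>
        intro n hn
        rcases le_or_gt n (2 ^ (s + t) * m) with h | h
        · refine (ih n h).trans ?_
          exact Finset.sum_le_sum_of_subset (Finset.range_subset_range.mpr (by omega))
        · have hsplit : Qb bb c (2 ^ s * m) (2 ^ (s + t) * m) x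
              + Qb bb c (2 ^ (s + t) * m) n x = Qb bb c (2 ^ s * m) n x := by
            rw [Qb, Qb, Qb]
            exact Finset.sum_Ioc_consecutive _ (hnsmono (by omega)) h.le
          rw [← hsplit]
          calc (‖Qb bb c (2 ^ s * m) (2 ^ (s + t) * m) x
                + Qb bb c (2 ^ (s + t) * m) n x‖₊ : ℝ≥0∞)
              ≤ (‖Qb bb c (2 ^ s * m) (2 ^ (s + t) * m) x‖₊ : ℝ≥0∞)
                + (‖Qb bb c (2 ^ (s + t) * m) n x‖₊ : ℝ≥0∞) := by
                rw [← ENNReal.coe_add]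
                exact_mod_cast nnnorm_add_le _ _
            _ ≤ (∑ u ∈ Finset.range t, w (s + u)) + w (s + t) := by
                refine add_le_add (ih _ le_rfl) ?_
                refine (hNx x hx _ _).trans ?_
                rw [eLpNorm_exponent_top] at *
                refine le_trans (le_of_eq rfl) ?_
                have := Hblock (s + t) n (by rw [show s + t + 1 = s + (t+1) by omega]; exact hn)
                rw [eLpNorm_exponent_top] at this
                exact this
            _ = ∑ u ∈ Finset.range (t + 1), w (s + u) := (Finset.sum_range_succ _ t).symm
  have E2 : ∀ x, x ∈ Nᶜ → ∀ s n : ℕ,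
      (‖Qb bb c (2 ^ s * m) n x‖₊ : ℝ≥0∞) ≤ eps s := by
    intro x hx s n
    have hn : n ≤ 2 ^ (s + n) * m := by
      calc n ≤ 2 ^ n := (Nat.lt_two_pow_self (n := n)).le
        _ ≤ 2 ^ (s + n) := Nat.pow_le_pow_right (by norm_num) (by omega)
        _ ≤ 2 ^ (s + n) * m := Nat.le_mul_of_pos_right _ (by omega)
    refine (E1 x hx s n n hn).trans ?_
    rw [hepsdef]
    have : ∀ u : ℕ, w (s + u) = w (u + s) := fun u => by rw [add_comm]
    simp only [this]
    exact ENNReal.sum_le_tsum _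
  have E3 : ∀ x, x ∈ Nᶜ → ∀ s n1 n2 : ℕ, 2 ^ s * m ≤ n1 → n1 ≤ n2 →
      (‖Qb bb c n1 n2 x‖₊ : ℝ≥0∞) ≤ 2 * eps s := by
    intro x hx s n1 n2 hsn1 h12
    have hsplit : Qb bb c (2 ^ s * m) n1 x + Qb bb c n1 n2 x
        = Qb bb c (2 ^ s * m) n2 x := by
      rw [Qb, Qb, Qb]
      exact Finset.sum_Ioc_consecutive _ hsn1 h12
    have h1 : Qb bb c n1 n2 x = Qb bb c (2 ^ s * m) n2 x - Qb bb c (2 ^ s * m) n1 x := by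
      rw [← hsplit]; ring
    calc (‖Qb bb c n1 n2 x‖₊ : ℝ≥0∞)
        = (‖Qb bb c (2 ^ s * m) n2 x - Qb bb c (2 ^ s * m) n1 x‖₊ : ℝ≥0∞) := by rw [h1]
      _ ≤ (‖Qb bb c (2 ^ s * m) n2 x‖₊ : ℝ≥0∞) + (‖Qb bb c (2 ^ s * m) n1 x‖₊ : ℝ≥0∞) := by
          rw [← ENNReal.coe_add]
          exact_mod_cast nnnorm_sub_le _ _
      _ ≤ eps s + eps s := add_le_add (E2 x hx s n2) (E2 x hx s n1)
      _ = 2 * eps s := (two_mul _).symm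
  -- uniform Cauchy property on `Nᶜ`
  have hCauchy : UniformCauchySeqOn (fun n x => Qb bb c m n x) Filter.atTop Nᶜ := by
    rw [Metric.uniformCauchySeqOn_iff]
    intro ε hε
    have hhalf : (0:ℝ≥0∞) < ENNReal.ofReal ε / 2 :=
      ENNReal.div_pos (ne_of_gt (ENNReal.ofReal_pos.mpr hε)) (by norm_num)
    obtain ⟨s, hs⟩ := (heps0.eventually_lt_const hhalf).exists
    refine ⟨2 ^ s * m, ?_⟩
    have key : ∀ a b : ℕ, 2 ^ s * m ≤ a → a ≤ b → ∀ x ∈ Nᶜ,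
        dist (Qb bb c m a x) (Qb bb c m b x) < ε := by
      intro a b ha hab x hx
      have hma : m ≤ a := le_trans (by nlinarith [Nat.one_le_two_pow (n := s)]) ha
      have hsplit : Qb bb c m a x + Qb bb c a b x = Qb bb c m b x := by
        rw [Qb, Qb, Qb]
        exact Finset.sum_Ioc_consecutive _ hma hab
      have hdist : dist (Qb bb c m a x) (Qb bb c m b x) = ‖Qb bb c a b x‖ := by
        rw [dist_eq_norm, ← hsplit]
        have : Qb bb c m a x - (Qb bb c m a x + Qb bb c a b x) = -(Qb bb c a b x) := by ring
        rw [this, norm_neg]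
      rw [hdist]
      have h1 : (‖Qb bb c a b x‖₊ : ℝ≥0∞) ≤ 2 * eps s := E3 x hx s a b ha hab
      have h2 : 2 * eps s < ENNReal.ofReal ε := by
        calc 2 * eps s < 2 * (ENNReal.ofReal ε / 2) := by
              refine ENNReal.mul_lt_mul_right (by norm_num) (by norm_num) ?_
              exact hs
          _ = ENNReal.ofReal ε := ENNReal.mul_div_cancel' (by norm_num) (by norm_num)
      have h3 : ENNReal.ofReal ‖Qb bb c a b x‖ < ENNReal.ofReal ε := by
        rw [ofReal_norm]
        exact lt_of_le_of_lt h1 h2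
      exact (ENNReal.ofReal_lt_ofReal_iff hε).mp h3
    intro n1 hn1 n2 hn2 x hx
    rcases le_total n1 n2 with h | h
    · exact key n1 n2 hn1 h x hx
    · rw [dist_comm]; exact key n2 n1 hn2 h x hx
  -- the uniform limit
  set g : D → ℂ := fun x => Filter.limUnder Filter.atTop (fun n => Qb bb c m n x) with hgdef
  have htend : ∀ x ∈ Nᶜ, Filter.Tendsto (fun n => Qb bb c m n x) Filter.atTop (nhds (g x)) :=
    fun x hx => (hCauchy.cauchySeq hx).tendsto_limUnder
  have hTU : TendstoUniformlyOn (fun n x => Qb bb c m n x) g Filter.atTop Nᶜ :=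
    hCauchy.tendstoUniformlyOn_of_tendsto htend
  -- bound on the limit
  have hgbound : ∀ x ∈ Nᶜ, (‖g x‖₊ : ℝ≥0∞) ≤ eps 0 := by
    intro x hx
    have h1 : Filter.Tendsto (fun n => (‖Qb bb c m n x‖₊ : ℝ≥0∞)) Filter.atTop
        (nhds ((‖g x‖₊ : ℝ≥0∞))) := ENNReal.tendsto_coe.mpr (htend x hx).nnnorm
    refine le_of_tendsto h1 ?_
    refine Filter.Eventually.of_forall fun n => ?_
    have := E2 x hx 0 n
    rwa [pow_zero, one_mul] at this
  -- `α` along the dyadic sequence tends to `0`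
  have hb1 : eLpNorm (bb 1) 2 μ = 1 := by
    have h11 : ⟪B 1, B 1⟫ = (1:ℂ) := by rw [hBB 1 1 le_rfl le_rfl, if_pos rfl]
    have hn1 : ‖B 1‖ = 1 := by
      have h2 := inner_self_eq_norm_sq_to_K (𝕜 := ℂ) (B 1)
      rw [h11] at h2
      have h3 : ‖B 1‖ ^ 2 = 1 := by
        have h5 := congrArg Complex.re h2.symm
        simpa [← Complex.ofReal_pow] using h5
      nlinarith [norm_nonneg (B 1)]
    have h4 : eLpNorm (bb 1) 2 μ = ENNReal.ofReal ‖B 1‖ := by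
      rw [← hLp2 (B 1)]
      exact eLpNorm_congr_ae (hBcoe 1 le_rfl).symm
    rw [h4, hn1]
    simp
  set δ : ℝ≥0∞ := eLpNorm (bb 1) ⊤ μ with hδdef
  have hδ0 : δ ≠ 0 := by
    intro h0
    have hz : bb 1 =ᵐ[μ] 0 :=
      (eLpNorm_eq_zero_iff (hmeas 1).aestronglyMeasurable (by norm_num)).mp h0
    have : eLpNorm (bb 1) 2 μ = 0 := by rw [eLpNorm_congr_ae hz, eLpNorm_zero]
    rw [hb1] at this
    exact one_ne_zero this
  have hδtop : δ ≠ ⊤ := by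
    obtain ⟨M, hM⟩ := hbdd 1
    have h1 : δ ≤ ENNReal.ofReal M := by
      rw [hδdef, eLpNorm_exponent_top]
      exact eLpNormEssSup_le_of_ae_bound (Filter.Eventually.of_forall hM)
    exact ne_top_of_le_ne_top ENNReal.ofReal_ne_top h1
  have hδle : ∀ n, 1 ≤ n → δ ≤ christoffel μ (Vspan bb n) := by
    intro n hn
    have h1 : eLpNorm (bb 1) ⊤ μ / eLpNorm (bb 1) 2 μ ≤ christoffel μ (Vspan bb n) :=
      le_iSup₂ (f := fun g (_ : g ∈ Vspan bb n) => eLpNorm g ⊤ μ / eLpNorm g 2 μ)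
        (bb 1) (Submodule.subset_span ⟨1, ⟨le_rfl, hn⟩, rfl⟩)
    rwa [hb1, div_one] at h1
  have hα0 : Filter.Tendsto (fun t => alphaSeq μ F bb (2 ^ t * m)) Filter.atTop (nhds 0) := by
    have hw0 : Filter.Tendsto w Filter.atTop (nhds 0) :=
      ENNReal.tendsto_atTop_zero_of_tsum_ne_top hwtop
    have hle : ∀ t, alphaSeq μ F bb (2 ^ t * m) ≤ w t / δ := by
      intro t
      rw [ENNReal.le_div_iff_mul_le (Or.inl hδ0) (Or.inl hδtop), hwdef]
      calc alphaSeq μ F bb (2 ^ t * m) * δ = δ * alphaSeq μ F bb (2 ^ t * m) := mul_comm _ _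
        _ ≤ christoffel μ (Vspan bb (2 ^ (t + 1) * m)) * alphaSeq μ F bb (2 ^ t * m) :=
            mul_le_mul_left (hδle _ (hns1 (t + 1))) _
    have hdiv : Filter.Tendsto (fun t => w t / δ) Filter.atTop (nhds 0) := by
      have h1 := ENNReal.Tendsto.mul_const hw0 (Or.inr (ENNReal.inv_ne_top.mpr hδ0))
      simp only [zero_mul] at h1
      simpa only [div_eq_mul_inv] using h1
    exact tendsto_of_tendsto_of_tendsto_of_le_of_le tendsto_const_nhds hdiv
      (fun t => zero_le) hle
  -- L² convergence of the partial sums along the dyadic sequence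
  have hAto0 : Filter.Tendsto (fun t => eLpNorm ((fun x => Qb bb c 0 (2 ^ t * m) x) - f) 2 μ)
      Filter.atTop (nhds 0) := by
    have key : ∀ t, eLpNorm ((fun x => Qb bb c 0 (2 ^ t * m) x) - f) 2 μ
        ≤ alphaSeq μ F bb (2 ^ t * m) := by
      intro t
      have heq : ((fun x => Qb bb c 0 (2 ^ t * m) x) - f)
          = fun x => -(f x - Qb bb c 0 (2 ^ t * m) x) := by
        funext x; simp only [Pi.sub_apply]; ring
      calc eLpNorm ((fun x => Qb bb c 0 (2 ^ t * m) x) - f) 2 μ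
          = eLpNorm (fun x => -(f x - Qb bb c 0 (2 ^ t * m) x)) 2 μ := by rw [heq]
        _ = eLpNorm (fun x => f x - Qb bb c 0 (2 ^ t * m) x) 2 μ := by
            have := eLpNorm_neg (f := fun x => f x - Qb bb c 0 (2 ^ t * m) x) (p := 2) (μ := μ)
            exact this
        _ ≤ alphaSeq μ F bb (2 ^ t * m) := hproj _
    exact tendsto_of_tendsto_of_tendsto_of_le_of_le tendsto_const_nhds hα0
      (fun t => zero_le) key
  have hTIM : TendstoInMeasure μ (fun t x => Qb bb c 0 (2 ^ t * m) x) Filter.atTop f :=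
    tendstoInMeasure_of_tendsto_eLpNorm (p := 2) (by norm_num)
      (fun t => (hQmeas 0 _).aestronglyMeasurable)
      (hFmeas f hf).aestronglyMeasurable hAto0
  obtain ⟨ns, hnsStrict, hnsae⟩ := hTIM.exists_seq_tendsto_ae
  have haeN : ∀ᵐ x ∂μ, x ∈ Nᶜ := compl_mem_ae_iff.mpr hNnull
  -- the a.e. identity
  have hae : ∀ᵐ x ∂μ, f x = Qb bb c 0 m x + g x := by
    filter_upwards [hnsae, haeN] with x hx1 hx2
    have hcomp : Filter.Tendsto (fun i => 2 ^ ns i * m) Filter.atTop Filter.atTop := by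
      refine Filter.tendsto_atTop_mono (fun i => ?_) Filter.tendsto_id
      have h1 : i ≤ ns i := hnsStrict.le_apply
      have h2 : ns i < 2 ^ ns i := Nat.lt_two_pow_self
      have h3 : 2 ^ ns i ≤ 2 ^ ns i * m := Nat.le_mul_of_pos_right _ (by omega)
      simp only [id_eq]
      omega
    have hg' : Filter.Tendsto (fun n => Qb bb c m n x) Filter.atTop (nhds (g x)) :=
      htend x hx2
    have htendsub : Filter.Tendsto (fun i => Qb bb c 0 (2 ^ ns i * m) x) Filter.atTop
        (nhds (Qb bb c 0 m x + g x)) := by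
      have h4 := (tendsto_const_nhds (x := Qb bb c 0 m x)
        (f := Filter.atTop (α := ℕ))).add (hg'.comp hcomp)
      refine h4.congr fun i => ?_
      show Qb bb c 0 m x + Qb bb c m (2 ^ ns i * m) x = Qb bb c 0 (2 ^ ns i * m) x
      rw [Qb, Qb, Qb]
      refine Finset.sum_Ioc_consecutive _ (Nat.zero_le m) ?_
      nlinarith [Nat.one_le_two_pow (n := ns i)]
    exact tendsto_nhds_unique hx1 htendsub
  -- assembling the conclusions
  refine ⟨g, N, hNnull, hTU, hae, ?_⟩
  have heqg : (fun x => f x - Qb bb c 0 m x) =ᵐ[μ] g := by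
    filter_upwards [hae] with x hx
    rw [hx]; ring
  rw [show (fun x => f x - ∑ k ∈ Finset.Ioc 0 m, c k * bb k x)
      = fun x => f x - Qb bb c 0 m x from rfl]
  rw [eLpNorm_congr_ae heqg]
  have h1 : eLpNorm g ⊤ μ ≤ eps 0 := by
    rw [eLpNorm_exponent_top, eLpNormEssSup]
    refine essSup_le_of_ae_le _ ?_
    filter_upwards [haeN] with x hx
    exact hgbound x hx
  refine h1.trans ?_
  have h2 : eps 0 = ∑' t, w t := by rw [hepsdef]; simp
  rw [h2]
  exact hwsum
end
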